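/- Let G be a group with subgroups A, B, C ≤ G such that: C normalizes B, B ∩ C = {e}; the product BC normalizes A; A ∩ BC = {e}; and G = ABC (so G is the ternary inner semidirect product [A[BC]]). Let S ⊆ G satisfy S ⊆ A ∪ B ∪ C (atomic). Then: (i) ⟨S⟩ ∩ C = ⟨S ∩ C⟩; (ii) ⟨S⟩ ∩ B = ⟨(S ∩ B)^{⟨S ∩ C⟩}⟩, the subgroup generated by { c b c⁻¹ : b ∈ S ∩ B, c ∈ ⟨S ∩ C⟩ }; (iii) ⟨S⟩ ∩ A = ⟨(S ∩ A)^{(⟨S⟩ ∩ B)(⟨S⟩ ∩ C)}⟩, the subgroup generated by { k a k⁻¹ : a ∈ S ∩ A, k ∈ (⟨S⟩ ∩ B)(⟨S⟩ ∩ C) }; and (iv) every h ∈ ⟨S⟩ can be written h = a·b·c with a ∈ ⟨S⟩ ∩ A, b ∈ ⟨S⟩ ∩ B, c ∈ ⟨S⟩ ∩ C. -/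

import Mathlib

/-- Let `G = [A[BC]]` be a ternary inner semidirect product:
`C` normalizes `B`, `B ∩ C = {e}`, the product set `BC` normalizes `A`, `A ∩ BC = {e}`,
and `G = ABC`.  Let `S ⊆ A ∪ B ∪ C` be atomic.  Then
(i) `⟨S⟩ ∩ C = ⟨S ∩ C⟩`;
(ii) `⟨S⟩ ∩ B = ⟨(S ∩ B)^{⟨S ∩ C⟩}⟩`;
(iii) `⟨S⟩ ∩ A = ⟨(S ∩ A)^{(⟨S⟩ ∩ B)(⟨S⟩ ∩ C)}⟩`;
(iv) every `h ∈ ⟨S⟩` factors as `h = a·b·c` with `a ∈ ⟨S⟩ ∩ A`, `b ∈ ⟨S⟩ ∩ B`,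
`c ∈ ⟨S⟩ ∩ C`. -/
theorem stmt_6 {G : Type*} [Group G] (A B C : Subgroup G)
    (hCnormB : C ≤ Subgroup.normalizer (B : Set G))
    (hBC : B ⊓ C = ⊥)
    (hBCnormA : ∀ k : G, (∃ b ∈ B, ∃ c ∈ C, k = b * c) → k ∈ Subgroup.normalizer (A : Set G))
    (hABC : ∀ x : G, x ∈ A → (∃ b ∈ B, ∃ c ∈ C, x = b * c) → x = 1)
    (hprod : ∀ g : G, ∃ a ∈ A, ∃ b ∈ B, ∃ c ∈ C, g = a * b * c)
    (S : Set G) (hS : S ⊆ (A : Set G) ∪ (B : Set G) ∪ (C : Set G)) :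
    Subgroup.closure S ⊓ C = Subgroup.closure (S ∩ (C : Set G)) ∧
    Subgroup.closure S ⊓ B =
      Subgroup.closure
        {x | ∃ b ∈ S ∩ (B : Set G), ∃ c ∈ Subgroup.closure (S ∩ (C : Set G)),
          x = c * b * c⁻¹} ∧
    Subgroup.closure S ⊓ A =
      Subgroup.closure
        {x | ∃ a ∈ S ∩ (A : Set G), ∃ k : G,
          (∃ b ∈ Subgroup.closure S ⊓ B, ∃ c ∈ Subgroup.closure S ⊓ C, k = b * c) ∧
          x = k * a * k⁻¹} ∧
    (∀ h ∈ Subgroup.closure S,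
      ∃ a ∈ Subgroup.closure S ⊓ A, ∃ b ∈ Subgroup.closure S ⊓ B,
        ∃ c ∈ Subgroup.closure S ⊓ C, h = a * b * c) := by
  classical
  set C1 : Subgroup G := Subgroup.closure (S ∩ (C : Set G)) with hC1def
  have hC1C : C1 ≤ C := (Subgroup.closure_le _).2 fun x hx => hx.2
  set Tgen : Set G := {x | ∃ b ∈ S ∩ (B : Set G), ∃ c ∈ C1, x = c * b * c⁻¹} with hTdef
  set B1 : Subgroup G := Subgroup.closure Tgen with hB1def
  have hB1B : B1 ≤ B := by
    apply (Subgroup.closure_le _).2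
    rintro x ⟨b, ⟨_, hbB⟩, c, hc, rfl⟩
    exact (Subgroup.mem_normalizer_iff.1 (hCnormB (hC1C hc)) b).1 hbB
  -- C1 normalizes B1
  have hC1nB1 : ∀ c ∈ C1, ∀ x ∈ B1, c * x * c⁻¹ ∈ B1 := by
    intro c hc x hx
    induction hx using Subgroup.closure_induction with
    | mem y hy =>
      obtain ⟨b, hb, c', hc', rfl⟩ := hy
      have h : c * (c' * b * c'⁻¹) * c⁻¹ = (c * c') * b * (c * c')⁻¹ := by group
      rw [h]
      exact Subgroup.subset_closure ⟨b, hb, c * c', mul_mem hc hc', rfl⟩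
    | one => simpa using one_mem B1
    | mul y z hy hz ihy ihz =>
      have h : c * (y * z) * c⁻¹ = (c * y * c⁻¹) * (c * z * c⁻¹) := by group
      rw [h]; exact mul_mem ihy ihz
    | inv y hy ihy =>
      have h : c * y⁻¹ * c⁻¹ = (c * y * c⁻¹)⁻¹ := by group
      rw [h]; exact inv_mem ihy
  -- the product set K = B1 C1
  set K : Set G := {k | ∃ b ∈ B1, ∃ c ∈ C1, k = b * c} with hKdef
  have hKone : (1 : G) ∈ K := ⟨1, one_mem _, 1, one_mem _, by simp⟩
  have hKmul : ∀ k ∈ K, ∀ k' ∈ K, k * k' ∈ K := by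
    rintro _ ⟨b, hb, c, hc, rfl⟩ _ ⟨b', hb', c', hc', rfl⟩
    exact ⟨b * (c * b' * c⁻¹), mul_mem hb (hC1nB1 c hc b' hb'), c * c', mul_mem hc hc', by group⟩
  have hKinv : ∀ k ∈ K, k⁻¹ ∈ K := by
    rintro _ ⟨b, hb, c, hc, rfl⟩
    exact ⟨c⁻¹ * b⁻¹ * c⁻¹⁻¹, hC1nB1 c⁻¹ (inv_mem hc) b⁻¹ (inv_mem hb), c⁻¹, inv_mem hc, by group⟩
  set Agen : Set G := {x | ∃ a ∈ S ∩ (A : Set G), ∃ k ∈ K, x = k * a * k⁻¹} with hAgendef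
  set A1 : Subgroup G := Subgroup.closure Agen with hA1def
  have hA1A : A1 ≤ A := by
    apply (Subgroup.closure_le _).2
    rintro x ⟨a, ⟨_, haA⟩, k, ⟨b, hb, c, hc, rfl⟩, rfl⟩
    have hk : b * c ∈ Subgroup.normalizer (A : Set G) := hBCnormA _ ⟨b, hB1B hb, c, hC1C hc, rfl⟩
    exact (Subgroup.mem_normalizer_iff.1 hk a).1 haA
  have hKnA1 : ∀ k ∈ K, ∀ x ∈ A1, k * x * k⁻¹ ∈ A1 := by
    intro k hk x hx
    induction hx using Subgroup.closure_induction with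
    | mem y hy =>
      obtain ⟨a, ha, k', hk', rfl⟩ := hy
      have h : k * (k' * a * k'⁻¹) * k⁻¹ = (k * k') * a * (k * k')⁻¹ := by group
      rw [h]
      exact Subgroup.subset_closure ⟨a, ha, k * k', hKmul k hk k' hk', rfl⟩
    | one => simpa using one_mem A1
    | mul y z hy hz ihy ihz =>
      have h : k * (y * z) * k⁻¹ = (k * y * k⁻¹) * (k * z * k⁻¹) := by group
      rw [h]; exact mul_mem ihy ihz
    | inv y hy ihy =>
      have h : k * y⁻¹ * k⁻¹ = (k * y * k⁻¹)⁻¹ := by group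
      rw [h]; exact inv_mem ihy
  -- P = A1 B1 C1 is a subgroup
  set P : Subgroup G :=
    { carrier := {g | ∃ a ∈ A1, ∃ b ∈ B1, ∃ c ∈ C1, g = a * b * c}
      one_mem' := ⟨1, one_mem _, 1, one_mem _, 1, one_mem _, by simp⟩
      mul_mem' := by
        rintro g g' ⟨a, ha, b, hb, c, hc, rfl⟩ ⟨a', ha', b', hb', c', hc', rfl⟩
        exact ⟨a * ((b * c) * a' * (b * c)⁻¹),
          mul_mem ha (hKnA1 (b * c) ⟨b, hb, c, hc, rfl⟩ a' ha'),
          b * (c * b' * c⁻¹), mul_mem hb (hC1nB1 c hc b' hb'),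
          c * c', mul_mem hc hc', by group⟩
      inv_mem' := by
        rintro g ⟨a, ha, b, hb, c, hc, rfl⟩
        exact ⟨(b * c)⁻¹ * a⁻¹ * ((b * c)⁻¹)⁻¹,
          hKnA1 (b * c)⁻¹ (hKinv _ ⟨b, hb, c, hc, rfl⟩) a⁻¹ (inv_mem ha),
          c⁻¹ * b⁻¹ * c⁻¹⁻¹, hC1nB1 c⁻¹ (inv_mem hc) b⁻¹ (inv_mem hb),
          c⁻¹, inv_mem hc, by group⟩ } with hPdef
  have hSP : S ⊆ (P : Set G) := by
    intro s hs
    rcases hS hs with (hsAB | hsC)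
    · rcases hsAB with (hsA | hsB)
      · exact ⟨s, Subgroup.subset_closure ⟨s, ⟨hs, hsA⟩, 1, hKone, by simp⟩,
          1, one_mem _, 1, one_mem _, by simp⟩
      · exact ⟨1, one_mem _, s, Subgroup.subset_closure ⟨s, ⟨hs, hsB⟩, 1, one_mem _, by simp⟩,
          1, one_mem _, by simp⟩
    · exact ⟨1, one_mem _, 1, one_mem _, s, Subgroup.subset_closure ⟨hs, hsC⟩, by simp⟩
  have hC1S : C1 ≤ Subgroup.closure S :=
    (Subgroup.closure_le _).2 fun x hx => Subgroup.subset_closure hx.1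
  have hB1S : B1 ≤ Subgroup.closure S := by
    apply (Subgroup.closure_le _).2
    rintro x ⟨b, ⟨hbS, _⟩, c, hc, rfl⟩
    exact mul_mem (mul_mem (hC1S hc) (Subgroup.subset_closure hbS)) (inv_mem (hC1S hc))
  have hKS : K ⊆ (Subgroup.closure S : Set G) := by
    rintro _ ⟨b, hb, c, hc, rfl⟩
    exact mul_mem (hB1S hb) (hC1S hc)
  have hA1S : A1 ≤ Subgroup.closure S := by
    apply (Subgroup.closure_le _).2
    rintro x ⟨a, ⟨haS, _⟩, k, hk, rfl⟩
    exact mul_mem (mul_mem (hKS hk) (Subgroup.subset_closure haS)) (inv_mem (hKS hk))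
  have hPS : P ≤ Subgroup.closure S := by
    rintro g ⟨a, ha, b, hb, c, hc, rfl⟩
    exact mul_mem (mul_mem (hA1S ha) (hB1S hb)) (hC1S hc)
  have hclos : Subgroup.closure S = P := le_antisymm ((Subgroup.closure_le _).2 hSP) hPS
  -- uniqueness of decomposition
  have huniq : ∀ a ∈ A, ∀ b ∈ B, ∀ c ∈ C, ∀ a' ∈ A, ∀ b' ∈ B, ∀ c' ∈ C,
      a * b * c = a' * b' * c' → a = a' ∧ b = b' ∧ c = c' := by
    intro a ha b hb c hc a' ha' b' hb' c' hc' heq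
    have h1 : a'⁻¹ * a = b' * c' * c⁻¹ * b⁻¹ := by
      calc a'⁻¹ * a = a'⁻¹ * (a * b * c) * c⁻¹ * b⁻¹ := by group
        _ = a'⁻¹ * (a' * b' * c') * c⁻¹ * b⁻¹ := by rw [heq]
        _ = b' * c' * c⁻¹ * b⁻¹ := by group
    have hcc : c' * c⁻¹ ∈ C := mul_mem hc' (inv_mem hc)
    have hbb : b' * ((c' * c⁻¹) * b⁻¹ * (c' * c⁻¹)⁻¹) ∈ B :=
      mul_mem hb' ((Subgroup.mem_normalizer_iff.1 (hCnormB hcc) b⁻¹).1 (inv_mem hb))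
    have haa : a'⁻¹ * a = 1 :=
      hABC _ (mul_mem (inv_mem ha') ha) ⟨_, hbb, _, hcc, by rw [h1]; group⟩
    have haeq : a = a' := (inv_mul_eq_one.1 haa).symm
    subst haeq
    have h2 : b * c = b' * c' := by
      have := heq
      rw [mul_assoc, mul_assoc] at this
      exact mul_left_cancel this
    have h3 : b'⁻¹ * b = c' * c⁻¹ := by
      calc b'⁻¹ * b = b'⁻¹ * (b * c) * c⁻¹ := by group
        _ = b'⁻¹ * (b' * c') * c⁻¹ := by rw [h2]
        _ = c' * c⁻¹ := by group
    have hb1 : b'⁻¹ * b = 1 := by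
      have : b'⁻¹ * b ∈ B ⊓ C := Subgroup.mem_inf.2 ⟨mul_mem (inv_mem hb') hb, h3 ▸ hcc⟩
      rw [hBC] at this
      exact this
    have hbeq : b = b' := (inv_mul_eq_one.1 hb1).symm
    subst hbeq
    exact ⟨rfl, rfl, mul_left_cancel h2⟩
  -- statement (i)
  have hi : Subgroup.closure S ⊓ C = C1 := by
    apply le_antisymm
    · rintro x ⟨hxS, hxC⟩
      rw [hclos] at hxS
      obtain ⟨a, ha, b, hb, c, hc, rfl⟩ := hxS
      obtain ⟨h1, h2, h3⟩ := huniq a (hA1A ha) b (hB1B hb) c (hC1C hc)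
        1 (one_mem A) 1 (one_mem B) (a * b * c) hxC (by group)
      rw [h1, h2]
      simpa using hc
    · exact le_inf hC1S hC1C
  -- statement (ii)
  have hii : Subgroup.closure S ⊓ B = B1 := by
    apply le_antisymm
    · rintro x ⟨hxS, hxB⟩
      rw [hclos] at hxS
      obtain ⟨a, ha, b, hb, c, hc, rfl⟩ := hxS
      obtain ⟨h1, h2, h3⟩ := huniq a (hA1A ha) b (hB1B hb) c (hC1C hc)
        1 (one_mem A) (a * b * c) hxB 1 (one_mem C) (by group)
      rw [h1, h3]
      simpa using hb
    · exact le_inf hB1S hB1B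
  -- statement (iii)
  have hiii : Subgroup.closure S ⊓ A = A1 := by
    apply le_antisymm
    · rintro x ⟨hxS, hxA⟩
      rw [hclos] at hxS
      obtain ⟨a, ha, b, hb, c, hc, rfl⟩ := hxS
      obtain ⟨h1, h2, h3⟩ := huniq a (hA1A ha) b (hB1B hb) c (hC1C hc)
        (a * b * c) hxA 1 (one_mem B) 1 (one_mem C) (by group)
      rw [h2, h3]
      simpa using ha
    · exact le_inf hA1S hA1A
  refine ⟨hi, hii, ?_, ?_⟩
  · -- (iii) in the stated form
    have hsetEq : {x | ∃ a ∈ S ∩ (A : Set G), ∃ k : G,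
        (∃ b ∈ Subgroup.closure S ⊓ B, ∃ c ∈ Subgroup.closure S ⊓ C, k = b * c) ∧
        x = k * a * k⁻¹} = Agen := by
      ext x
      constructor
      · rintro ⟨a, ha, k, ⟨b, hb, c, hc, rfl⟩, rfl⟩
        exact ⟨a, ha, b * c, ⟨b, hii ▸ hb, c, hi ▸ hc, rfl⟩, rfl⟩
      · rintro ⟨a, ha, k, ⟨b, hb, c, hc, rfl⟩, rfl⟩
        exact ⟨a, ha, b * c, ⟨b, hii ▸ hb, c, hi ▸ hc, rfl⟩, rfl⟩
    rw [hsetEq]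
    exact hiii
  · -- (iv)
    intro h hh
    rw [hclos] at hh
    obtain ⟨a, ha, b, hb, c, hc, rfl⟩ := hh
    exact ⟨a, ⟨hA1S ha, hA1A ha⟩, b, ⟨hB1S hb, hB1B hb⟩, c, ⟨hC1S hc, hC1C hc⟩, rfl⟩
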